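/- Let 𝔸 : ℝ² → ℝ² be continuously differentiable, Λ-periodic and odd (𝔸(−x) = −𝔸(x)). Let ξ ∈ ℝ² and let φ₁ : ℝ² → ℂ be continuously differentiable and ξ-quasiperiodic, and set φ₂(x) := conj(φ₁(−x)). Then ∫_𝕃 conj(φ₂)·(𝕎φ₁) dx = 0, ∫_𝕃 conj(φ₁)·(𝕎φ₂) dx = 0, and ∫_𝕃 conj(φ₁)·(𝕎φ₁) dx = −∫_𝕃 conj(φ₂)·(𝕎φ₂) dx. -/

import Mathlib

open MeasureTheory Set

/-- The Euclidean inner product on `ℝ²`. -/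
def dot2 (x y : ℝ × ℝ) : ℝ := x.1 * y.1 + x.2 * y.2

/-- `f` is `ξ`-quasiperiodic with respect to the lattice `ℤv₁ + ℤv₂`. -/
def Quasiperiodic (v₁ v₂ ξ : ℝ × ℝ) (f : ℝ × ℝ → ℂ) : Prop :=
  ∀ (x : ℝ × ℝ) (m n : ℤ),
    f (x + ((m : ℝ) • v₁ + (n : ℝ) • v₂)) =
      Complex.exp (Complex.I * (dot2 ξ ((m : ℝ) • v₁ + (n : ℝ) • v₂) : ℂ)) * f x

/-- The fundamental cell `𝕃 = {s₁v₁ + s₂v₂ : s₁, s₂ ∈ [0,1)}`. -/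
def cell (v₁ v₂ : ℝ × ℝ) : Set (ℝ × ℝ) :=
  {x | ∃ s₁ s₂ : ℝ, s₁ ∈ Set.Ico (0 : ℝ) 1 ∧ s₂ ∈ Set.Ico (0 : ℝ) 1 ∧
    x = s₁ • v₁ + s₂ • v₂}

/-- Divergence of a vector field `𝔸 : ℝ² → ℝ²`. -/
noncomputable def divA (𝔸 : ℝ × ℝ → ℝ × ℝ) (x : ℝ × ℝ) : ℝ :=
  fderiv ℝ (fun y => (𝔸 y).1) x ((1 : ℝ), (0 : ℝ)) +
    fderiv ℝ (fun y => (𝔸 y).2) x ((0 : ℝ), (1 : ℝ))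

/-- The magnetic operator `𝕎 = 𝔸·D_x + D_x·𝔸 = (2/i) 𝔸·∇ + (1/i)(div 𝔸)`. -/
noncomputable def Wop (𝔸 : ℝ × ℝ → ℝ × ℝ) (φ : ℝ × ℝ → ℂ) (x : ℝ × ℝ) : ℂ :=
  (2 / Complex.I) * fderiv ℝ φ x (𝔸 x) + (1 / Complex.I) * (divA 𝔸 x : ℂ) * φ x


noncomputable def mkE (v₁ v₂ : ℝ × ℝ) (hΔ : v₁.1 * v₂.2 - v₁.2 * v₂.1 ≠ 0) :
    (ℝ × ℝ) ≃L[ℝ] (ℝ × ℝ) :=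
  LinearEquiv.toContinuousLinearEquiv
  { toFun := fun s => s.1 • v₁ + s.2 • v₂
    map_add' := fun a b => by
      simp [Prod.ext_iff, Prod.fst_add, Prod.snd_add]; constructor <;> ring
    map_smul' := fun c a => by
      simp [Prod.ext_iff, Prod.smul_fst, Prod.smul_snd]; constructor <;> ring
    invFun := fun x => ((v₂.2 * x.1 - v₂.1 * x.2) / (v₁.1 * v₂.2 - v₁.2 * v₂.1),
      (v₁.1 * x.2 - v₁.2 * x.1) / (v₁.1 * v₂.2 - v₁.2 * v₂.1))
    left_inv := fun s => by
      simp [Prod.ext_iff, Prod.smul_fst, Prod.smul_snd]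
      have hΔ' : v₂.2 * v₁.1 - v₂.1 * v₁.2 ≠ 0 := by intro h; apply hΔ; linarith
      constructor <;> (field_simp <;> ring)
    right_inv := fun x => by
      simp [Prod.ext_iff, Prod.smul_fst, Prod.smul_snd]
      have hΔ' : v₂.2 * v₁.1 - v₂.1 * v₁.2 ≠ 0 := by intro h; apply hΔ; linarith
      constructor <;> (field_simp <;> ring) }

lemma mkE_apply (v₁ v₂ : ℝ × ℝ) (hΔ) (s : ℝ × ℝ) :
    mkE v₁ v₂ hΔ s = s.1 • v₁ + s.2 • v₂ := rfl
variable {v₁ v₂ : ℝ × ℝ} (e : (ℝ × ℝ) ≃L[ℝ] (ℝ × ℝ))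
  (he : ∀ s : ℝ × ℝ, e s = s.1 • v₁ + s.2 • v₂)

include he in
lemma cell_eq : cell v₁ v₂ = e '' (Set.Ico (0:ℝ) 1 ×ˢ Set.Ico (0:ℝ) 1) := by
  ext x
  constructor
  · rintro ⟨s₁, s₂, h₁, h₂, rfl⟩
    exact ⟨(s₁, s₂), ⟨h₁, h₂⟩, (he (s₁, s₂)).symm ▸ rfl⟩
  · rintro ⟨s, ⟨h₁, h₂⟩, rfl⟩
    exact ⟨s.1, s.2, h₁, h₂, (he s)⟩

-- change of variables
lemma cov (g : ℝ × ℝ → ℂ) (S : Set (ℝ × ℝ)) (hS : MeasurableSet S) :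
    ∫ x in e '' S, g x = |(e.toContinuousLinearMap : (ℝ×ℝ) →L[ℝ] (ℝ×ℝ)).det| •
      ∫ s in S, g (e s) := by
  rw [integral_image_eq_integral_abs_det_fderiv_smul volume hS
    (fun x _ => e.hasFDerivAt.hasFDerivWithinAt) (e.injective.injOn) g]
  rw [integral_smul]

lemma vol_prod_null_left (A : Set ℝ) (hA : volume A = 0) (B : Set ℝ) :
    volume (A ×ˢ B) = 0 := by
  rw [show (volume : Measure (ℝ×ℝ)) = (volume : Measure ℝ).prod volume from rfl,
    Measure.prod_prod, hA, zero_mul]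

lemma vol_prod_null_right (A : Set ℝ) (B : Set ℝ) (hB : volume B = 0) :
    volume (A ×ˢ B) = 0 := by
  rw [show (volume : Measure (ℝ×ℝ)) = (volume : Measure ℝ).prod volume from rfl,
    Measure.prod_prod, hB, mul_zero]

lemma vol_two_pts : volume ({(0:ℝ),1} : Set ℝ) = 0 :=
  (Set.toFinite _).countable.measure_zero volume

lemma sq_ae_Ioc :
    ((Set.Ico (0:ℝ) 1 ×ˢ Set.Ico (0:ℝ) 1 : Set (ℝ×ℝ))) =ᵐ[volume]
      (Set.Ioc (0:ℝ) 1 ×ˢ Set.Ioc (0:ℝ) 1 : Set (ℝ×ℝ)) := by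
  have hN : volume (({(0:ℝ),1} ×ˢ (Set.univ : Set ℝ)) ∪ ((Set.univ : Set ℝ) ×ˢ {(0:ℝ),1})) = 0 :=
    measure_union_null (vol_prod_null_left _ vol_two_pts _) (vol_prod_null_right _ _ vol_two_pts)
  rw [MeasureTheory.ae_eq_set]
  constructor
  · refine measure_mono_null ?_ hN
    rintro ⟨x₁, x₂⟩ ⟨⟨⟨a1, b1⟩, a2, b2⟩, h3⟩
    simp only [Set.mem_prod, Set.mem_Ioc] at h3
    have : x₁ = 0 ∨ x₂ = 0 := by
      rcases not_and_or.mp h3 with h | h <;> rcases not_and_or.mp h with h | h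
      · left; linarith [not_lt.mp h]
      · left; linarith [not_le.mp h]
      · right; linarith [not_lt.mp h]
      · right; linarith [not_le.mp h]
    rcases this with h | h <;> simp [h]
  · refine measure_mono_null ?_ hN
    rintro ⟨x₁, x₂⟩ ⟨⟨⟨a1, b1⟩, a2, b2⟩, h3⟩
    simp only [Set.mem_prod, Set.mem_Ico] at h3
    have : x₁ = 1 ∨ x₂ = 1 := by
      rcases not_and_or.mp h3 with h | h <;> rcases not_and_or.mp h with h | h
      · left; linarith [not_le.mp h]
      · left; linarith [not_lt.mp h]
      · right; linarith [not_le.mp h]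
      · right; linarith [not_lt.mp h]
    rcases this with h | h <;> simp [h]

lemma sq_ae_Icc :
    ((Set.Ico (0:ℝ) 1 ×ˢ Set.Ico (0:ℝ) 1 : Set (ℝ×ℝ))) =ᵐ[volume]
      (Set.Icc (0:ℝ) 1 ×ˢ Set.Icc (0:ℝ) 1 : Set (ℝ×ℝ)) := by
  have hN : volume (({(0:ℝ),1} ×ˢ (Set.univ : Set ℝ)) ∪ ((Set.univ : Set ℝ) ×ˢ {(0:ℝ),1})) = 0 :=
    measure_union_null (vol_prod_null_left _ vol_two_pts _) (vol_prod_null_right _ _ vol_two_pts)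
  rw [MeasureTheory.ae_eq_set]
  constructor
  · refine measure_mono_null ?_ (measure_empty)
    rintro ⟨x₁, x₂⟩ ⟨⟨⟨a1, b1⟩, a2, b2⟩, h3⟩
    exact absurd ⟨⟨a1, le_of_lt b1⟩, ⟨a2, le_of_lt b2⟩⟩ h3
  · refine measure_mono_null ?_ hN
    rintro ⟨x₁, x₂⟩ ⟨⟨⟨a1, b1⟩, a2, b2⟩, h3⟩
    simp only [Set.mem_prod, Set.mem_Ico] at h3
    have : x₁ = 1 ∨ x₂ = 1 := by
      rcases not_and_or.mp h3 with h | h <;> rcases not_and_or.mp h with h | h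
      · left; linarith [not_le.mp h]
      · left; linarith [not_lt.mp h]
      · right; linarith [not_le.mp h]
      · right; linarith [not_lt.mp h]
    rcases this with h | h <;> simp [h]

include he in
lemma refl_int (f : ℝ × ℝ → ℂ)
    (hper : ∀ (x : ℝ × ℝ) (m n : ℤ), f (x + ((m:ℝ) • v₁ + (n:ℝ) • v₂)) = f x) :
    (∫ x in cell v₁ v₂, f (-x)) = ∫ x in cell v₁ v₂, f x := by
  have hQ : MeasurableSet (Set.Ico (0:ℝ) 1 ×ˢ Set.Ico (0:ℝ) 1) :=
    measurableSet_Ico.prod measurableSet_Ico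
  rw [cell_eq e he, cov e _ _ hQ, cov e _ _ hQ]
  congr 1
  have key : ∀ s : ℝ × ℝ, f (-(e s)) = f (e (((1:ℝ),(1:ℝ)) - s)) := by
    intro s
    have h1 : e (((1:ℝ),(1:ℝ)) - s) = -(e s) + (((1:ℤ):ℝ) • v₁ + ((1:ℤ):ℝ) • v₂) := by
      rw [he, he]
      push_cast
      simp only [Prod.fst_sub, Prod.snd_sub]
      module
    rw [h1, hper (-(e s)) 1 1]
  have hpre : (fun s : ℝ × ℝ => ((1:ℝ),(1:ℝ)) - s) ⁻¹'
      (Set.Ioc (0:ℝ) 1 ×ˢ Set.Ioc (0:ℝ) 1) = Set.Ico (0:ℝ) 1 ×ˢ Set.Ico (0:ℝ) 1 := by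
    ext ⟨x₁, x₂⟩
    simp only [Set.mem_preimage, Set.mem_prod, Set.mem_Ioc, Set.mem_Ico, Prod.fst_sub,
      Prod.snd_sub]
    constructor
    · rintro ⟨⟨a, b⟩, c, d⟩
      refine ⟨⟨by linarith, by linarith⟩, by linarith, by linarith⟩
    · rintro ⟨⟨a, b⟩, c, d⟩
      refine ⟨⟨by linarith, by linarith⟩, by linarith, by linarith⟩
  calc (∫ s in Set.Ico (0:ℝ) 1 ×ˢ Set.Ico (0:ℝ) 1, f (-(e s)))
      = ∫ s in Set.Ico (0:ℝ) 1 ×ˢ Set.Ico (0:ℝ) 1, f (e (((1:ℝ),(1:ℝ)) - s)) := by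
        simp only [key]
    _ = ∫ y in Set.Ioc (0:ℝ) 1 ×ˢ Set.Ioc (0:ℝ) 1, f (e y) := by
        rw [← hpre]
        exact (Measure.measurePreserving_sub_left volume _).setIntegral_preimage_emb
          (MeasurableEquiv.subLeft ((1:ℝ),(1:ℝ))).measurableEmbedding (fun y => f (e y)) _
    _ = ∫ s in Set.Ico (0:ℝ) 1 ×ˢ Set.Ico (0:ℝ) 1, f (e s) :=
        (setIntegral_congr_set sq_ae_Ioc).symm
-- decomposition of a CLM on ℝ×ℝ
lemma clm_decomp {E : Type*} [NormedAddCommGroup E] [NormedSpace ℝ E]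
    (L : ℝ × ℝ →L[ℝ] E) (w : ℝ × ℝ) :
    L w = w.1 • L ((1:ℝ), (0:ℝ)) + w.2 • L ((0:ℝ), (1:ℝ)) := by
  have hw : w = w.1 • ((1:ℝ), (0:ℝ)) + w.2 • ((0:ℝ), (1:ℝ)) := by
    simp [Prod.ext_iff]
  conv_lhs => rw [hw]
  rw [map_add, ContinuousLinearMap.map_smul, ContinuousLinearMap.map_smul]

include he in
lemma div_int_zero (hΔ : v₁.1 * v₂.2 - v₁.2 * v₂.1 ≠ 0)
    (𝔸 : ℝ × ℝ → ℝ × ℝ) (h𝔸C1 : ContDiff ℝ 1 𝔸)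
    (h𝔸per : ∀ (x : ℝ × ℝ) (m n : ℤ), 𝔸 (x + ((m:ℝ) • v₁ + (n:ℝ) • v₂)) = 𝔸 x)
    (ψ : ℝ × ℝ → ℂ) (hψC1 : ContDiff ℝ 1 ψ)
    (hψper : ∀ (x : ℝ × ℝ) (m n : ℤ), ψ (x + ((m:ℝ) • v₁ + (n:ℝ) • v₂)) = ψ x) :
    ∫ x in cell v₁ v₂, (fderiv ℝ ψ x (𝔸 x) + (divA 𝔸 x : ℂ) * ψ x) = 0 := by
  classical
  set p := v₁.1 with hp
  set q := v₁.2 with hq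
  set r := v₂.1 with hr
  set u := v₂.2 with hu
  set Δ : ℝ := p * u - q * r with hΔdef
  set A1 : ℝ × ℝ → ℝ := fun y => (𝔸 y).1 with hA1def
  set A2 : ℝ × ℝ → ℝ := fun y => (𝔸 y).2 with hA2def
  have hA1C : ContDiff ℝ 1 A1 := contDiff_fst.comp h𝔸C1
  have hA2C : ContDiff ℝ 1 A2 := contDiff_snd.comp h𝔸C1
  have hψd : Differentiable ℝ ψ := hψC1.differentiable one_ne_zero
  have hA1d : Differentiable ℝ A1 := hA1C.differentiable one_ne_zero
  have hA2d : Differentiable ℝ A2 := hA2C.differentiable one_ne_zero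
  -- the integrand
  set I : ℝ × ℝ → ℂ := fun x => fderiv ℝ ψ x (𝔸 x) + (divA 𝔸 x : ℂ) * ψ x with hIdef
  have hIcont : Continuous I := by
    apply Continuous.add
    · exact (hψC1.continuous_fderiv one_ne_zero).clm_apply h𝔸C1.continuous
    · apply Continuous.mul
      · apply Continuous.comp Complex.continuous_ofReal
        exact ((hA1C.continuous_fderiv one_ne_zero).clm_apply continuous_const).add
          ((hA2C.continuous_fderiv one_ne_zero).clm_apply continuous_const)
      · exact hψC1.continuous
  -- the two auxiliary functions
  set G₁ : ℝ × ℝ → ℂ := fun s =>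
    ((u / Δ : ℝ) : ℂ) * (ψ (e s) * ((A1 (e s) : ℝ) : ℂ)) -
    ((r / Δ : ℝ) : ℂ) * (ψ (e s) * ((A2 (e s) : ℝ) : ℂ)) with hG₁def
  set G₂ : ℝ × ℝ → ℂ := fun s =>
    ((p / Δ : ℝ) : ℂ) * (ψ (e s) * ((A2 (e s) : ℝ) : ℂ)) -
    ((q / Δ : ℝ) : ℂ) * (ψ (e s) * ((A1 (e s) : ℝ) : ℂ)) with hG₂def
  set eL : (ℝ × ℝ) →L[ℝ] (ℝ × ℝ) := (e : (ℝ × ℝ) →L[ℝ] (ℝ × ℝ)) with heL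
  set Dψ : (ℝ × ℝ) → ((ℝ × ℝ) →L[ℝ] ℂ) := fun s => (fderiv ℝ ψ (e s)).comp eL with hDψ
  set DA1 : (ℝ × ℝ) → ((ℝ × ℝ) →L[ℝ] ℂ) := fun s =>
    Complex.ofRealCLM.comp ((fderiv ℝ A1 (e s)).comp eL) with hDA1
  set DA2 : (ℝ × ℝ) → ((ℝ × ℝ) →L[ℝ] ℂ) := fun s =>
    Complex.ofRealCLM.comp ((fderiv ℝ A2 (e s)).comp eL) with hDA2
  set G₁' : (ℝ × ℝ) → ((ℝ × ℝ) →L[ℝ] ℂ) := fun s =>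
    ((u / Δ : ℝ) : ℂ) • (ψ (e s) • DA1 s + ((A1 (e s) : ℝ) : ℂ) • Dψ s) -
    ((r / Δ : ℝ) : ℂ) • (ψ (e s) • DA2 s + ((A2 (e s) : ℝ) : ℂ) • Dψ s) with hG₁'def
  set G₂' : (ℝ × ℝ) → ((ℝ × ℝ) →L[ℝ] ℂ) := fun s =>
    ((p / Δ : ℝ) : ℂ) • (ψ (e s) • DA2 s + ((A2 (e s) : ℝ) : ℂ) • Dψ s) -
    ((q / Δ : ℝ) : ℂ) • (ψ (e s) • DA1 s + ((A1 (e s) : ℝ) : ℂ) • Dψ s) with hG₂'def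
  have heval : ∀ s : ℝ × ℝ, e s = s.1 • v₁ + s.2 • v₂ := he
  have he10 : eL ((1:ℝ), (0:ℝ)) = v₁ := by
    show e ((1:ℝ), (0:ℝ)) = v₁
    rw [he]; simp
  have he01 : eL ((0:ℝ), (1:ℝ)) = v₂ := by
    show e ((0:ℝ), (1:ℝ)) = v₂
    rw [he]; simp
  -- derivative facts
  have hψe : ∀ s, HasFDerivAt (fun t => ψ (e t)) (Dψ s) s := fun s =>
    (hψd (e s)).hasFDerivAt.comp s e.hasFDerivAt
  have hA1e : ∀ s, HasFDerivAt (fun t => ((A1 (e t) : ℝ) : ℂ)) (DA1 s) s := fun s =>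
    Complex.ofRealCLM.hasFDerivAt.comp s ((hA1d (e s)).hasFDerivAt.comp s e.hasFDerivAt)
  have hA2e : ∀ s, HasFDerivAt (fun t => ((A2 (e t) : ℝ) : ℂ)) (DA2 s) s := fun s =>
    Complex.ofRealCLM.hasFDerivAt.comp s ((hA2d (e s)).hasFDerivAt.comp s e.hasFDerivAt)
  have hG₁' : ∀ s, HasFDerivAt G₁ (G₁' s) s := fun s =>
    (((hψe s).mul (hA1e s)).const_mul _).sub (((hψe s).mul (hA2e s)).const_mul _)
  have hG₂' : ∀ s, HasFDerivAt G₂ (G₂' s) s := fun s =>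
    (((hψe s).mul (hA2e s)).const_mul _).sub (((hψe s).mul (hA1e s)).const_mul _)
  -- key evaluation
  have hkey : ∀ s : ℝ × ℝ, G₁' s ((1:ℝ), (0:ℝ)) + G₂' s ((0:ℝ), (1:ℝ)) = I (e s) := by
    intro s
    have hdψ1 : fderiv ℝ ψ (e s) v₁ =
        p • (fderiv ℝ ψ (e s) ((1:ℝ),(0:ℝ))) + q • (fderiv ℝ ψ (e s) ((0:ℝ),(1:ℝ))) :=
      clm_decomp _ v₁
    have hdψ2 : fderiv ℝ ψ (e s) v₂ =
        r • (fderiv ℝ ψ (e s) ((1:ℝ),(0:ℝ))) + u • (fderiv ℝ ψ (e s) ((0:ℝ),(1:ℝ))) :=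
      clm_decomp _ v₂
    have hdψA : fderiv ℝ ψ (e s) (𝔸 (e s)) =
        (A1 (e s)) • (fderiv ℝ ψ (e s) ((1:ℝ),(0:ℝ))) +
        (A2 (e s)) • (fderiv ℝ ψ (e s) ((0:ℝ),(1:ℝ))) :=
      clm_decomp _ (𝔸 (e s))
    have hda11 : fderiv ℝ A1 (e s) v₁ =
        p • (fderiv ℝ A1 (e s) ((1:ℝ),(0:ℝ))) + q • (fderiv ℝ A1 (e s) ((0:ℝ),(1:ℝ))) :=
      clm_decomp _ v₁
    have hda12 : fderiv ℝ A1 (e s) v₂ =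
        r • (fderiv ℝ A1 (e s) ((1:ℝ),(0:ℝ))) + u • (fderiv ℝ A1 (e s) ((0:ℝ),(1:ℝ))) :=
      clm_decomp _ v₂
    have hda21 : fderiv ℝ A2 (e s) v₁ =
        p • (fderiv ℝ A2 (e s) ((1:ℝ),(0:ℝ))) + q • (fderiv ℝ A2 (e s) ((0:ℝ),(1:ℝ))) :=
      clm_decomp _ v₁
    have hda22 : fderiv ℝ A2 (e s) v₂ =
        r • (fderiv ℝ A2 (e s) ((1:ℝ),(0:ℝ))) + u • (fderiv ℝ A2 (e s) ((0:ℝ),(1:ℝ))) :=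
      clm_decomp _ v₂
    simp only [hG₁'def, hG₂'def, ContinuousLinearMap.sub_apply, ContinuousLinearMap.smul_apply,
      ContinuousLinearMap.add_apply, ContinuousLinearMap.comp_apply, hDψ, hDA1, hDA2,
      Complex.ofRealCLM_apply, he10, he01, hIdef, divA]
    rw [hdψ1, hdψ2, hdψA, hda11, hda12, hda21, hda22]
    set a1 := fderiv ℝ ψ (e s) ((1:ℝ),(0:ℝ))
    set a2 := fderiv ℝ ψ (e s) ((0:ℝ),(1:ℝ))
    set b11 := fderiv ℝ A1 (e s) ((1:ℝ),(0:ℝ))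
    set b12 := fderiv ℝ A1 (e s) ((0:ℝ),(1:ℝ))
    set b21 := fderiv ℝ A2 (e s) ((1:ℝ),(0:ℝ))
    set b22 := fderiv ℝ A2 (e s) ((0:ℝ),(1:ℝ))
    simp only [smul_eq_mul, Complex.real_smul, Complex.ofReal_add, Complex.ofReal_mul]
    have hΔc : ((p * u - q * r : ℝ) : ℂ) ≠ 0 :=
      Complex.ofReal_ne_zero.mpr (by rw [← hΔdef]; exact hΔ)
    have hΔc2 : ((Δ : ℝ) : ℂ) ≠ 0 := Complex.ofReal_ne_zero.mpr hΔ
    push_cast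
    field_simp [hΔc, hΔc2]
    rw [hΔdef]
    push_cast
    ring
  -- continuity of the pieces
  have hψec : Continuous fun s : ℝ × ℝ => ψ (e s) := hψC1.continuous.comp e.continuous
  have hA1ec : Continuous fun s : ℝ × ℝ => ((A1 (e s) : ℝ) : ℂ) :=
    Complex.continuous_ofReal.comp (hA1C.continuous.comp e.continuous)
  have hA2ec : Continuous fun s : ℝ × ℝ => ((A2 (e s) : ℝ) : ℂ) :=
    Complex.continuous_ofReal.comp (hA2C.continuous.comp e.continuous)
  have hG₁c : Continuous G₁ :=
    (continuous_const.mul (hψec.mul hA1ec)).sub (continuous_const.mul (hψec.mul hA2ec))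
  have hG₂c : Continuous G₂ :=
    (continuous_const.mul (hψec.mul hA2ec)).sub (continuous_const.mul (hψec.mul hA1ec))
  have hle : ((0:ℝ),(0:ℝ)) ≤ ((1:ℝ),(1:ℝ)) := Prod.mk_le_mk.mpr ⟨zero_le_one, zero_le_one⟩
  have hIi : IntegrableOn (fun x => G₁' x ((1:ℝ),(0:ℝ)) + G₂' x ((0:ℝ),(1:ℝ)))
      (Set.Icc ((0:ℝ),(0:ℝ)) ((1:ℝ),(1:ℝ))) volume := by
    refine ContinuousOn.integrableOn_compact isCompact_Icc ?_
    have hfe : (fun x => G₁' x ((1:ℝ),(0:ℝ)) + G₂' x ((0:ℝ),(1:ℝ))) = fun x => I (e x) :=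
      funext hkey
    rw [hfe]
    exact (hIcont.comp e.continuous).continuousOn
  have hdiv := integral_divergence_prod_Icc_of_hasFDerivAt_off_countable_of_le
    G₁ G₂ G₁' G₂' ((0:ℝ),(0:ℝ)) ((1:ℝ),(1:ℝ)) hle ∅ Set.countable_empty
    hG₁c.continuousOn hG₂c.continuousOn (fun x _ => hG₁' x) (fun x _ => hG₂' x) hIi
  -- boundary terms vanish by periodicity
  have hB2 : ∀ x : ℝ, G₂ (x, (1:ℝ)) = G₂ (x, (0:ℝ)) := by
    intro x
    have hx : e (x, (1:ℝ)) = e (x, (0:ℝ)) + (((0:ℤ):ℝ) • v₁ + ((1:ℤ):ℝ) • v₂) := by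
      rw [he, he]; push_cast; module
    simp only [hG₂def, hA1def, hA2def, hx, hψper _ 0 1, h𝔸per _ 0 1]
  have hB1 : ∀ y : ℝ, G₁ ((1:ℝ), y) = G₁ ((0:ℝ), y) := by
    intro y
    have hy : e ((1:ℝ), y) = e ((0:ℝ), y) + (((1:ℤ):ℝ) • v₁ + ((0:ℤ):ℝ) • v₂) := by
      rw [he, he]; push_cast; module
    simp only [hG₁def, hA1def, hA2def, hy, hψper _ 1 0, h𝔸per _ 1 0]
  -- change of variables and conclusion
  have hQ : MeasurableSet (Set.Ico (0:ℝ) 1 ×ˢ Set.Ico (0:ℝ) 1) :=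
    measurableSet_Ico.prod measurableSet_Ico
  rw [cell_eq e he, cov e _ _ hQ]
  have hmain : (∫ s in Set.Ico (0:ℝ) 1 ×ˢ Set.Ico (0:ℝ) 1,
      (fderiv ℝ ψ (e s) (𝔸 (e s)) + (divA 𝔸 (e s) : ℂ) * ψ (e s))) = 0 := by
    have : (fun s => fderiv ℝ ψ (e s) (𝔸 (e s)) + (divA 𝔸 (e s) : ℂ) * ψ (e s)) =
        fun x => G₁' x ((1:ℝ),(0:ℝ)) + G₂' x ((0:ℝ),(1:ℝ)) := (funext hkey).symm
    rw [setIntegral_congr_set sq_ae_Icc, Set.Icc_prod_Icc, this, hdiv]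
    simp only [hB1, hB2]
    ring
  rw [hmain, smul_zero]

section Toolkit

variable {F : Type*} [NormedAddCommGroup F] [NormedSpace ℝ F]

lemma fderiv_translate {f : ℝ × ℝ → F} (hf : Differentiable ℝ f) (w x : ℝ × ℝ) :
    fderiv ℝ (fun y => f (y + w)) x = fderiv ℝ f (x + w) := by
  have h2 : HasFDerivAt (fun y : ℝ × ℝ => y + w) (ContinuousLinearMap.id ℝ (ℝ × ℝ)) x :=
    (hasFDerivAt_id x).add_const w
  have h1 := (hf (x + w)).hasFDerivAt.comp x h2
  simpa [Function.comp_def] using h1.fderiv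

lemma fderiv_comp_neg_apply {f : ℝ × ℝ → F} (hf : Differentiable ℝ f) (x v : ℝ × ℝ) :
    fderiv ℝ (fun y => f (-y)) x v = -(fderiv ℝ f (-x) v) := by
  have h2 : HasFDerivAt (fun y : ℝ × ℝ => -y) (-(ContinuousLinearMap.id ℝ (ℝ × ℝ))) x :=
    (hasFDerivAt_id x).neg
  have h1 : HasFDerivAt (fun y => f (-y))
      ((fderiv ℝ f (-x)).comp (-(ContinuousLinearMap.id ℝ (ℝ × ℝ)))) x :=
    (hf (-x)).hasFDerivAt.comp x h2
  rw [h1.fderiv]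
  simp

end Toolkit

section Lattice

variable {v₁ v₂ ξ : ℝ × ℝ}

lemma fderiv_qp {φ : ℝ × ℝ → ℂ} (hφ : ContDiff ℝ 1 φ) (hqp : Quasiperiodic v₁ v₂ ξ φ)
    (x : ℝ × ℝ) (m n : ℤ) :
    fderiv ℝ φ (x + ((m:ℝ) • v₁ + (n:ℝ) • v₂)) =
      Complex.exp (Complex.I * (dot2 ξ ((m:ℝ) • v₁ + (n:ℝ) • v₂) : ℂ)) • fderiv ℝ φ x := by
  have hd : Differentiable ℝ φ := hφ.differentiable one_ne_zero
  have hfun : (fun y => φ (y + ((m:ℝ) • v₁ + (n:ℝ) • v₂))) =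
      fun y => Complex.exp (Complex.I * (dot2 ξ ((m:ℝ) • v₁ + (n:ℝ) • v₂) : ℂ)) * φ y :=
    funext fun y => hqp y m n
  rw [← fderiv_translate hd ((m:ℝ) • v₁ + (n:ℝ) • v₂) x, hfun, fderiv_const_mul (hd x)]

lemma divA_per {𝔸 : ℝ × ℝ → ℝ × ℝ} (h𝔸C1 : ContDiff ℝ 1 𝔸)
    (h𝔸per : ∀ (x : ℝ × ℝ) (m n : ℤ), 𝔸 (x + ((m:ℝ) • v₁ + (n:ℝ) • v₂)) = 𝔸 x)
    (x : ℝ × ℝ) (m n : ℤ) :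
    divA 𝔸 (x + ((m:ℝ) • v₁ + (n:ℝ) • v₂)) = divA 𝔸 x := by
  have hA1d : Differentiable ℝ (fun y => (𝔸 y).1) :=
    (contDiff_fst.comp h𝔸C1).differentiable one_ne_zero
  have hA2d : Differentiable ℝ (fun y => (𝔸 y).2) :=
    (contDiff_snd.comp h𝔸C1).differentiable one_ne_zero
  have h1 : (fun y => (𝔸 (y + ((m:ℝ) • v₁ + (n:ℝ) • v₂))).1) = fun y => (𝔸 y).1 :=
    funext fun y => by rw [h𝔸per y m n]
  have h2 : (fun y => (𝔸 (y + ((m:ℝ) • v₁ + (n:ℝ) • v₂))).2) = fun y => (𝔸 y).2 :=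
    funext fun y => by rw [h𝔸per y m n]
  unfold divA
  rw [← fderiv_translate hA1d _ x, ← fderiv_translate hA2d _ x, h1, h2]

lemma divA_even {𝔸 : ℝ × ℝ → ℝ × ℝ} (h𝔸C1 : ContDiff ℝ 1 𝔸)
    (h𝔸odd : ∀ x, 𝔸 (-x) = -𝔸 x) (x : ℝ × ℝ) : divA 𝔸 (-x) = divA 𝔸 x := by
  have hA1d : Differentiable ℝ (fun y => (𝔸 y).1) :=
    (contDiff_fst.comp h𝔸C1).differentiable one_ne_zero
  have hA2d : Differentiable ℝ (fun y => (𝔸 y).2) :=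
    (contDiff_snd.comp h𝔸C1).differentiable one_ne_zero
  have key : ∀ (g : ℝ × ℝ → ℝ), Differentiable ℝ g → (∀ y, g (-y) = -g y) →
      ∀ v, fderiv ℝ g (-x) v = fderiv ℝ g x v := by
    intro g hg hodd v
    have h1 : fderiv ℝ (fun y => g (-y)) x v = -(fderiv ℝ g (-x) v) :=
      fderiv_comp_neg_apply hg x v
    have h2 : (fun y => g (-y)) = fun y => -(g y) := funext fun y => hodd y
    rw [h2] at h1
    rw [fderiv_fun_neg] at h1
    simp only [ContinuousLinearMap.neg_apply, neg_inj] at h1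
    exact h1.symm
  unfold divA
  rw [key _ hA1d (fun y => by rw [h𝔸odd y]; rfl) _, key _ hA2d (fun y => by rw [h𝔸odd y]; rfl) _]

end Lattice

section Tool2

variable {v₁ v₂ ξ : ℝ × ℝ}

lemma conj_exp_I (r : ℝ) :
    (starRingEnd ℂ) (Complex.exp (Complex.I * (r : ℂ))) =
      Complex.exp (-(Complex.I * (r : ℂ))) := by
  rw [← Complex.exp_conj]
  congr 1
  simp [Complex.conj_ofReal]

lemma pair_per {f g : ℝ × ℝ → ℂ} (hf : Quasiperiodic v₁ v₂ ξ f)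
    (hg : Quasiperiodic v₁ v₂ ξ g) (x : ℝ × ℝ) (m n : ℤ) :
    (starRingEnd ℂ) (f (x + ((m:ℝ) • v₁ + (n:ℝ) • v₂))) * g (x + ((m:ℝ) • v₁ + (n:ℝ) • v₂)) =
      (starRingEnd ℂ) (f x) * g x := by
  rw [hf x m n, hg x m n, map_mul, conj_exp_I]
  have : Complex.exp (-(Complex.I * ((dot2 ξ ((m:ℝ) • v₁ + (n:ℝ) • v₂) : ℝ) : ℂ))) *
      Complex.exp (Complex.I * ((dot2 ξ ((m:ℝ) • v₁ + (n:ℝ) • v₂) : ℝ) : ℂ)) = 1 := by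
    rw [← Complex.exp_add, neg_add_cancel, Complex.exp_zero]
  calc Complex.exp (-(Complex.I * _)) * (starRingEnd ℂ) (f x) *
        (Complex.exp (Complex.I * _) * g x)
      = (Complex.exp (-(Complex.I * _)) * Complex.exp (Complex.I * _)) *
        ((starRingEnd ℂ) (f x) * g x) := by ring
    _ = (starRingEnd ℂ) (f x) * g x := by rw [this, one_mul]

lemma divA_cont {𝔸 : ℝ × ℝ → ℝ × ℝ} (h𝔸C1 : ContDiff ℝ 1 𝔸) : Continuous (divA 𝔸) := by
  unfold divA
  exact (((contDiff_fst.comp h𝔸C1).continuous_fderiv one_ne_zero).clm_apply continuous_const).add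
    (((contDiff_snd.comp h𝔸C1).continuous_fderiv one_ne_zero).clm_apply continuous_const)

lemma Wop_cont {𝔸 : ℝ × ℝ → ℝ × ℝ} (h𝔸C1 : ContDiff ℝ 1 𝔸) {φ : ℝ × ℝ → ℂ}
    (hφ : ContDiff ℝ 1 φ) : Continuous (Wop 𝔸 φ) := by
  unfold Wop
  exact (continuous_const.mul ((hφ.continuous_fderiv one_ne_zero).clm_apply h𝔸C1.continuous)).add
    ((continuous_const.mul (Complex.continuous_ofReal.comp (divA_cont h𝔸C1))).mul hφ.continuous)

lemma Wop_qp {𝔸 : ℝ × ℝ → ℝ × ℝ} (h𝔸C1 : ContDiff ℝ 1 𝔸)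
    (h𝔸per : ∀ (x : ℝ × ℝ) (m n : ℤ), 𝔸 (x + ((m:ℝ) • v₁ + (n:ℝ) • v₂)) = 𝔸 x)
    {φ : ℝ × ℝ → ℂ} (hφ : ContDiff ℝ 1 φ) (hqp : Quasiperiodic v₁ v₂ ξ φ) :
    Quasiperiodic v₁ v₂ ξ (Wop 𝔸 φ) := by
  intro x m n
  unfold Wop
  rw [h𝔸per x m n, divA_per h𝔸C1 h𝔸per x m n, fderiv_qp hφ hqp x m n, hqp x m n]
  simp only [ContinuousLinearMap.smul_apply, smul_eq_mul]
  ring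

end Tool2

include he in
lemma int_cell (f : ℝ × ℝ → ℂ) (hf : Continuous f) : IntegrableOn f (cell v₁ v₂) := by
  have hsub : cell v₁ v₂ ⊆ e '' (Set.Icc (0:ℝ) 1 ×ˢ Set.Icc (0:ℝ) 1) := by
    rw [cell_eq e he]
    exact Set.image_mono (Set.prod_mono Set.Ico_subset_Icc_self Set.Ico_subset_Icc_self)
  have hK : IsCompact (e '' (Set.Icc (0:ℝ) 1 ×ˢ Set.Icc (0:ℝ) 1)) :=
    (isCompact_Icc.prod isCompact_Icc).image e.continuous
  exact (hf.continuousOn.integrableOn_compact hK).mono_set hsub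

section Tool3

lemma hasFDerivAt_conj (z : ℂ) :
    HasFDerivAt (fun w : ℂ => (starRingEnd ℂ) w)
      (Complex.conjCLE : ℂ ≃L[ℝ] ℂ).toContinuousLinearMap z :=
  Complex.conjCLE.toContinuousLinearMap.hasFDerivAt

lemma hasFDerivAt_comp_neg {φ : ℝ × ℝ → ℂ} (hφ : Differentiable ℝ φ) (x : ℝ × ℝ) :
    HasFDerivAt (fun y => φ (-y))
      ((fderiv ℝ φ (-x)).comp (-(ContinuousLinearMap.id ℝ (ℝ × ℝ)))) x :=
  (hφ (-x)).hasFDerivAt.comp x ((hasFDerivAt_id x).neg)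

lemma fderiv_conj_comp_neg {φ : ℝ × ℝ → ℂ} (hφ : Differentiable ℝ φ) (x v : ℝ × ℝ) :
    fderiv ℝ (fun y => (starRingEnd ℂ) (φ (-y))) x v =
      -((starRingEnd ℂ) (fderiv ℝ φ (-x) v)) := by
  have h4 : HasFDerivAt (fun y => (starRingEnd ℂ) (φ (-y)))
      ((Complex.conjCLE : ℂ ≃L[ℝ] ℂ).toContinuousLinearMap.comp
        ((fderiv ℝ φ (-x)).comp (-(ContinuousLinearMap.id ℝ (ℝ × ℝ))))) x :=
    (hasFDerivAt_conj (φ (-x))).comp x (hasFDerivAt_comp_neg hφ x)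
  rw [h4.fderiv]
  simp [Complex.conjCLE_apply]

lemma fderiv_psi {φ : ℝ × ℝ → ℂ} (hφ : Differentiable ℝ φ) (x v : ℝ × ℝ) :
    fderiv ℝ (fun y => φ (-y) * φ y) x v =
      φ (-x) * fderiv ℝ φ x v - φ x * fderiv ℝ φ (-x) v := by
  have h6 := (hasFDerivAt_comp_neg hφ x).mul (hφ x).hasFDerivAt
  rw [show (fun y => φ (-y) * φ y) = (fun y => φ (-y)) * φ from rfl, h6.fderiv]
  simp only [ContinuousLinearMap.add_apply, ContinuousLinearMap.smul_apply,
    ContinuousLinearMap.comp_apply, ContinuousLinearMap.neg_apply,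
    ContinuousLinearMap.coe_id', id_eq, map_neg, smul_eq_mul]
  ring

lemma fderiv_rho {φ : ℝ × ℝ → ℂ} (hφ : Differentiable ℝ φ) (x v : ℝ × ℝ) :
    fderiv ℝ (fun y => (starRingEnd ℂ) (φ y) * φ y) x v =
      (starRingEnd ℂ) (φ x) * fderiv ℝ φ x v + (starRingEnd ℂ) (fderiv ℝ φ x v) * φ x := by
  have h5 : HasFDerivAt (fun y => (starRingEnd ℂ) (φ y))
      ((Complex.conjCLE : ℂ ≃L[ℝ] ℂ).toContinuousLinearMap.comp (fderiv ℝ φ x)) x :=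
    (hasFDerivAt_conj (φ x)).comp x (hφ x).hasFDerivAt
  have h6 := h5.mul (hφ x).hasFDerivAt
  rw [show (fun y => (starRingEnd ℂ) (φ y) * φ y) = (fun y => (starRingEnd ℂ) (φ y)) * φ from rfl,
    h6.fderiv]
  simp only [ContinuousLinearMap.add_apply, ContinuousLinearMap.smul_apply,
    ContinuousLinearMap.comp_apply, ContinuousLinearEquiv.coe_coe, smul_eq_mul]
  rw [Complex.conjCLE_apply]
  ring

end Tool3


/-- Lemma 1p of the paper: for an odd periodic magnetic potential `𝔸` and
`φ₂(x) = conj(φ₁(−x))`, the off-diagonal matrix elements of `𝕎` vanish and the diagonal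
ones are opposite. -/
theorem stmt7 (v₁ v₂ : ℝ × ℝ) (hindep : LinearIndependent ℝ ![v₁, v₂])
    (𝔸 : ℝ × ℝ → ℝ × ℝ) (h𝔸C1 : ContDiff ℝ 1 𝔸)
    (h𝔸per : ∀ (x : ℝ × ℝ) (m n : ℤ), 𝔸 (x + ((m : ℝ) • v₁ + (n : ℝ) • v₂)) = 𝔸 x)
    (h𝔸odd : ∀ x, 𝔸 (-x) = -𝔸 x)
    (ξ : ℝ × ℝ) (φ₁ : ℝ × ℝ → ℂ) (hφ₁C1 : ContDiff ℝ 1 φ₁)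
    (hφ₁qp : Quasiperiodic v₁ v₂ ξ φ₁)
    (φ₂ : ℝ × ℝ → ℂ) (hφ₂ : ∀ x, φ₂ x = (starRingEnd ℂ) (φ₁ (-x))) :
    (∫ x in cell v₁ v₂, (starRingEnd ℂ) (φ₂ x) * Wop 𝔸 φ₁ x) = 0 ∧
    (∫ x in cell v₁ v₂, (starRingEnd ℂ) (φ₁ x) * Wop 𝔸 φ₂ x) = 0 ∧
    (∫ x in cell v₁ v₂, (starRingEnd ℂ) (φ₁ x) * Wop 𝔸 φ₁ x) =
      -∫ x in cell v₁ v₂, (starRingEnd ℂ) (φ₂ x) * Wop 𝔸 φ₂ x := by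
  classical
  have hΔ : v₁.1 * v₂.2 - v₁.2 * v₂.1 ≠ 0 := by
    rw [linearIndependent_fin2] at hindep
    obtain ⟨h2, h3⟩ := hindep
    simp only [Matrix.cons_val_one, Matrix.head_cons, Matrix.cons_val_zero] at h2 h3
    intro hΔ0
    by_cases h1 : v₂.1 = 0
    · have h2' : v₂.2 ≠ 0 := fun h => h2 (Prod.ext h1 h)
      exact h3 (v₁.2 / v₂.2) (Prod.ext (by simp only [Prod.smul_fst, smul_eq_mul]; field_simp; nlinarith [hΔ0])
        (by simp only [Prod.smul_snd, smul_eq_mul]; field_simp))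
    · exact h3 (v₁.1 / v₂.1) (Prod.ext (by simp only [Prod.smul_fst, smul_eq_mul]; field_simp)
      (by simp only [Prod.smul_snd, smul_eq_mul]; field_simp; nlinarith [hΔ0]))
  set e := mkE v₁ v₂ hΔ with hedef
  have he : ∀ s : ℝ × ℝ, e s = s.1 • v₁ + s.2 • v₂ := fun s => rfl
  have hφ₁d : Differentiable ℝ φ₁ := hφ₁C1.differentiable one_ne_zero
  have hφ₂eq : φ₂ = fun x => (starRingEnd ℂ) (φ₁ (-x)) := funext hφ₂
  have hconjC1 : ∀ (f : ℝ × ℝ → ℂ), ContDiff ℝ 1 f →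
      ContDiff ℝ 1 (fun x => (starRingEnd ℂ) (f x)) := by
    intro f hf
    have h := (Complex.conjCLE : ℂ ≃L[ℝ] ℂ).contDiff.comp hf
    simpa [Complex.conjCLE_apply, Function.comp_def, Complex.conjCAE_apply] using h
  have hφ₂C1 : ContDiff ℝ 1 φ₂ := by
    rw [hφ₂eq]
    exact hconjC1 _ (hφ₁C1.comp contDiff_neg)
  have hφ₂d : Differentiable ℝ φ₂ := hφ₂C1.differentiable one_ne_zero
  have hconjφ₂ : ∀ x, (starRingEnd ℂ) (φ₂ x) = φ₁ (-x) := fun x => by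
    rw [hφ₂ x, Complex.conj_conj]
  have hφ₂qp : Quasiperiodic v₁ v₂ ξ φ₂ := by
    intro x m n
    have hm : -(x + ((m:ℝ) • v₁ + (n:ℝ) • v₂)) =
        -x + ((((-m : ℤ)):ℝ) • v₁ + (((-n : ℤ)):ℝ) • v₂) := by
      push_cast; module
    rw [hφ₂, hφ₂, hm, hφ₁qp (-x) (-m) (-n), map_mul, conj_exp_I]
    congr 2
    have hd : dot2 ξ ((((-m : ℤ)):ℝ) • v₁ + (((-n : ℤ)):ℝ) • v₂) =
        -dot2 ξ ((m:ℝ) • v₁ + (n:ℝ) • v₂) := by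
      simp only [dot2, Prod.smul_fst, Prod.smul_snd, Prod.fst_add, Prod.snd_add, smul_eq_mul]
      push_cast; ring
    rw [hd]
    push_cast; ring
  have hW1c := Wop_cont h𝔸C1 hφ₁C1
  have hW2c := Wop_cont h𝔸C1 hφ₂C1
  have hW1qp := Wop_qp h𝔸C1 h𝔸per hφ₁C1 hφ₁qp
  have hW2qp := Wop_qp h𝔸C1 h𝔸per hφ₂C1 hφ₂qp
  have hDφ₂ : ∀ x v, fderiv ℝ φ₂ x v = -((starRingEnd ℂ) (fderiv ℝ φ₁ (-x) v)) := by
    intro x v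
    rw [hφ₂eq]
    exact fderiv_conj_comp_neg hφ₁d x v
  have hφ₁cc : Continuous fun x => (starRingEnd ℂ) (φ₁ x) :=
    Complex.continuous_conj.comp hφ₁C1.continuous
  have hφ₂cc : Continuous fun x => (starRingEnd ℂ) (φ₂ x) :=
    Complex.continuous_conj.comp hφ₂C1.continuous
  -- Claim 1
  set g : ℝ × ℝ → ℂ := fun x => (starRingEnd ℂ) (φ₂ x) * Wop 𝔸 φ₁ x with hgdef
  have hgc : Continuous g := hφ₂cc.mul hW1c
  have hgper : ∀ (x : ℝ × ℝ) (m n : ℤ), g (x + ((m:ℝ) • v₁ + (n:ℝ) • v₂)) = g x :=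
    fun x m n => pair_per hφ₂qp hW1qp x m n
  have hψC1 : ContDiff ℝ 1 (fun y => φ₁ (-y) * φ₁ y) := (hφ₁C1.comp contDiff_neg).mul hφ₁C1
  have hψper : ∀ (x : ℝ × ℝ) (m n : ℤ),
      (fun y => φ₁ (-y) * φ₁ y) (x + ((m:ℝ) • v₁ + (n:ℝ) • v₂)) = (fun y => φ₁ (-y) * φ₁ y) x := by
    intro x m n
    have h := pair_per hφ₂qp hφ₁qp x m n
    simpa only [hconjφ₂] using h
  have hdiv0 := div_int_zero e he hΔ 𝔸 h𝔸C1 h𝔸per _ hψC1 hψper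
  have hkey1 : ∀ x, g x + g (-x) = (2 / Complex.I) *
      (fderiv ℝ (fun y => φ₁ (-y) * φ₁ y) x (𝔸 x) +
        ((divA 𝔸 x : ℝ) : ℂ) * ((fun y => φ₁ (-y) * φ₁ y) x)) := by
    intro x
    simp only [hgdef, hconjφ₂, neg_neg, Wop]
    rw [divA_even h𝔸C1 h𝔸odd x, h𝔸odd x, fderiv_psi hφ₁d x (𝔸 x),
      (fderiv ℝ φ₁ (-x)).map_neg (𝔸 x)]
    ring
  have hgint : IntegrableOn g (cell v₁ v₂) := int_cell e he g hgc
  have hgnegint : IntegrableOn (fun x => g (-x)) (cell v₁ v₂) :=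
    int_cell e he _ (hgc.comp continuous_neg)
  have hsum : (∫ x in cell v₁ v₂, (g x + g (-x))) = 0 := by
    calc (∫ x in cell v₁ v₂, (g x + g (-x)))
        = ∫ x in cell v₁ v₂, (2 / Complex.I) *
            (fderiv ℝ (fun y => φ₁ (-y) * φ₁ y) x (𝔸 x) +
              ((divA 𝔸 x : ℝ) : ℂ) * ((fun y => φ₁ (-y) * φ₁ y) x)) := by
          simp only [hkey1]
      _ = (2 / Complex.I) • ∫ x in cell v₁ v₂,
            (fderiv ℝ (fun y => φ₁ (-y) * φ₁ y) x (𝔸 x) +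
              ((divA 𝔸 x : ℝ) : ℂ) * ((fun y => φ₁ (-y) * φ₁ y) x)) := by
          rw [← integral_smul]
          simp [smul_eq_mul]
      _ = 0 := by rw [hdiv0, smul_zero]
  have hreflg := refl_int e he g hgper
  have claim1 : (∫ x in cell v₁ v₂, g x) = 0 := by
    rw [integral_add hgint hgnegint, hreflg] at hsum
    have h2 : (2:ℂ) * ∫ x in cell v₁ v₂, g x = 0 := by rw [two_mul]; exact hsum
    simpa using h2
  refine ⟨claim1, ?_, ?_⟩
  · -- Claim 2
    have hhper := fun x m n => pair_per hφ₁qp hW2qp x m n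
    have hkey2 : ∀ x : ℝ × ℝ, (starRingEnd ℂ) (φ₁ (-x)) * Wop 𝔸 φ₂ (-x) =
        -((starRingEnd ℂ) (g x)) := by
      intro x
      simp only [hgdef, Wop]
      rw [hDφ₂ (-x) (𝔸 (-x)), neg_neg, h𝔸odd x, divA_even h𝔸C1 h𝔸odd x,
        (fderiv ℝ φ₁ x).map_neg (𝔸 x), hφ₂ (-x), neg_neg]
      simp only [map_mul, map_add, map_neg, map_div₀, Complex.conj_I, Complex.conj_ofReal,
        Complex.conj_conj, map_ofNat, map_one, hφ₂]
      ring
    have hrefl := refl_int e he (fun y => (starRingEnd ℂ) (φ₁ y) * Wop 𝔸 φ₂ y) hhper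
    have heq : (∫ x in cell v₁ v₂, (starRingEnd ℂ) (φ₁ (-x)) * Wop 𝔸 φ₂ (-x)) =
        ∫ x in cell v₁ v₂, -((starRingEnd ℂ) (g x)) := by simp only [hkey2]
    have hfin : (∫ x in cell v₁ v₂, (starRingEnd ℂ) (φ₁ x) * Wop 𝔸 φ₂ x) =
        ∫ x in cell v₁ v₂, -((starRingEnd ℂ) (g x)) := by rw [← hrefl]; exact heq
    rw [hfin, integral_neg, integral_conj, claim1, map_zero, neg_zero]
  · -- Claim 3
    have haper := fun x m n => pair_per hφ₁qp hW1qp x m n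
    have hac : Continuous (fun x => (starRingEnd ℂ) (φ₁ x) * Wop 𝔸 φ₁ x) := hφ₁cc.mul hW1c
    have hkey3 : ∀ x : ℝ × ℝ, (starRingEnd ℂ) (φ₂ x) * Wop 𝔸 φ₂ x =
        -((starRingEnd ℂ) ((starRingEnd ℂ) (φ₁ (-x)) * Wop 𝔸 φ₁ (-x))) := by
      intro x
      simp only [Wop]
      rw [hDφ₂ x (𝔸 x), hconjφ₂ x, divA_even h𝔸C1 h𝔸odd x, h𝔸odd x,
        (fderiv ℝ φ₁ (-x)).map_neg (𝔸 x), hφ₂ x]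
      simp only [map_mul, map_add, map_neg, map_div₀, Complex.conj_I, Complex.conj_ofReal,
        Complex.conj_conj, map_ofNat, map_one]
      ring
    have hρC1 : ContDiff ℝ 1 (fun y => (starRingEnd ℂ) (φ₁ y) * φ₁ y) :=
      (hconjC1 φ₁ hφ₁C1).mul hφ₁C1
    have hρper := fun x m n => pair_per hφ₁qp hφ₁qp x m n
    have hdivρ := div_int_zero e he hΔ 𝔸 h𝔸C1 h𝔸per _ hρC1 hρper
    have hkeyρ : ∀ x : ℝ × ℝ, ((starRingEnd ℂ) (φ₁ x) * Wop 𝔸 φ₁ x) -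
        (starRingEnd ℂ) ((starRingEnd ℂ) (φ₁ x) * Wop 𝔸 φ₁ x) = (2 / Complex.I) *
        (fderiv ℝ (fun y => (starRingEnd ℂ) (φ₁ y) * φ₁ y) x (𝔸 x) +
          ((divA 𝔸 x : ℝ) : ℂ) * ((fun y => (starRingEnd ℂ) (φ₁ y) * φ₁ y) x)) := by
      intro x
      rw [fderiv_rho hφ₁d x (𝔸 x)]
      simp only [Wop, map_mul, map_add, map_div₀, Complex.conj_I, Complex.conj_ofReal,
        Complex.conj_conj, map_ofNat, map_one]
      ring
    have haint := int_cell e he _ hac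
    have hacint := int_cell e he
      (fun x => (starRingEnd ℂ) ((starRingEnd ℂ) (φ₁ x) * Wop 𝔸 φ₁ x))
      (Complex.continuous_conj.comp hac)
    have hreal : (∫ x in cell v₁ v₂, (starRingEnd ℂ) (φ₁ x) * Wop 𝔸 φ₁ x) =
        (starRingEnd ℂ) (∫ x in cell v₁ v₂, (starRingEnd ℂ) (φ₁ x) * Wop 𝔸 φ₁ x) := by
      have h0 : (∫ x in cell v₁ v₂, (((starRingEnd ℂ) (φ₁ x) * Wop 𝔸 φ₁ x) -
          (starRingEnd ℂ) ((starRingEnd ℂ) (φ₁ x) * Wop 𝔸 φ₁ x))) = 0 := by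
        calc (∫ x in cell v₁ v₂, (((starRingEnd ℂ) (φ₁ x) * Wop 𝔸 φ₁ x) -
            (starRingEnd ℂ) ((starRingEnd ℂ) (φ₁ x) * Wop 𝔸 φ₁ x)))
            = ∫ x in cell v₁ v₂, (2 / Complex.I) *
              (fderiv ℝ (fun y => (starRingEnd ℂ) (φ₁ y) * φ₁ y) x (𝔸 x) +
                ((divA 𝔸 x : ℝ) : ℂ) * ((fun y => (starRingEnd ℂ) (φ₁ y) * φ₁ y) x)) := by
              simp only [hkeyρ]
          _ = (2 / Complex.I) • ∫ x in cell v₁ v₂,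
              (fderiv ℝ (fun y => (starRingEnd ℂ) (φ₁ y) * φ₁ y) x (𝔸 x) +
                ((divA 𝔸 x : ℝ) : ℂ) * ((fun y => (starRingEnd ℂ) (φ₁ y) * φ₁ y) x)) := by
              rw [← integral_smul]
              simp [smul_eq_mul]
          _ = 0 := by rw [hdivρ, smul_zero]
      rw [integral_sub haint hacint, integral_conj, sub_eq_zero] at h0
      exact h0
    have hrefla := refl_int e he (fun x => (starRingEnd ℂ) (φ₁ x) * Wop 𝔸 φ₁ x) haper
    have hb : (∫ x in cell v₁ v₂, (starRingEnd ℂ) (φ₂ x) * Wop 𝔸 φ₂ x) =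
        -(∫ x in cell v₁ v₂, (starRingEnd ℂ) (φ₁ x) * Wop 𝔸 φ₁ x) := by
      calc (∫ x in cell v₁ v₂, (starRingEnd ℂ) (φ₂ x) * Wop 𝔸 φ₂ x)
          = ∫ x in cell v₁ v₂,
              -((starRingEnd ℂ) ((starRingEnd ℂ) (φ₁ (-x)) * Wop 𝔸 φ₁ (-x))) := by
            simp only [hkey3]
        _ = -((starRingEnd ℂ) (∫ x in cell v₁ v₂,
              (starRingEnd ℂ) (φ₁ (-x)) * Wop 𝔸 φ₁ (-x))) := by
            rw [integral_neg, integral_conj]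
        _ = -((starRingEnd ℂ) (∫ x in cell v₁ v₂,
              (starRingEnd ℂ) (φ₁ x) * Wop 𝔸 φ₁ x)) := by rw [hrefla]
        _ = -(∫ x in cell v₁ v₂, (starRingEnd ℂ) (φ₁ x) * Wop 𝔸 φ₁ x) := by rw [← hreal]
    rw [hb, neg_neg]
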